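/- Let g be a symmetric positive definite 2×2 real matrix, u ∈ ℝ² with uᵀ g⁻¹ u = 1, α ≠ 0 a real number, and K̂ = α(2 u uᵀ − g). Let ℓ₁, ℓ₂ ∈ ℝ² with ℓ₁ᵀ g ℓ₁ ≠ 0. Then the three conditions ℓ₁ᵀ g ℓ₂ = 0, ℓ₁ᵀ g ℓ₁ = ℓ₂ᵀ g ℓ₂, and ℓ₁ᵀ K̂ ℓ₂ = 0 hold simultaneously if and only if there exist γ ≠ 0 and ε ∈ {1,−1} such that either (ℓ₁ = γ·Ju and ℓ₂ = ε γ·g⁻¹u) or (ℓ₂ = γ·Ju and ℓ₁ = ε γ·g⁻¹u), where (Ju)^a = Σ_b ε^{ab} u_b / √(det g) with ε^{12} = −ε^{21} = 1, ε^{11} = ε^{22} = 0. -/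

import Mathlib

open Matrix
open scoped BigOperators

private lemma core_alg (a b c d : ℝ) (h1 : a*c + b*d = 0) (h2 : a^2+b^2 = c^2+d^2)
    (h3 : a*c - b*d = 0) (hne : a^2+b^2 ≠ 0) :
    (a = 0 ∧ d = 0 ∧ (c = b ∨ c = -b)) ∨ (b = 0 ∧ c = 0 ∧ (d = a ∨ d = -a)) := by
  have hac : a*c = 0 := by linarith
  have hbd : b*d = 0 := by linarith
  rcases mul_eq_zero.1 hac with ha | hc
  · left
    have hb : b ≠ 0 := by
      intro h; apply hne; rw [ha, h]; ring
    have hd : d = 0 := by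
      rcases mul_eq_zero.1 hbd with h | h
      · exact absurd h hb
      · exact h
    refine ⟨ha, hd, ?_⟩
    have hcb : (c - b) * (c + b) = 0 := by
      have hx : c^2 = b^2 := by rw [ha, hd] at h2; linarith
      nlinarith [hx]
    rcases mul_eq_zero.1 hcb with h | h
    · left; linarith
    · right; linarith
  · right
    have hb : b = 0 := by
      by_contra hb
      have hd : d = 0 := by
        rcases mul_eq_zero.1 hbd with h | h
        · exact absurd h hb
        · exact h
      apply hne; rw [h2, hc, hd]; ring
    refine ⟨hb, hc, ?_⟩
    have hda : (d - a) * (d + a) = 0 := by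
      have hx : d^2 = a^2 := by rw [hb, hc] at h2; linarith
      nlinarith [hx]
    rcases mul_eq_zero.1 hda with h | h
    · left; linarith
    · right; linarith

private lemma dec_comp0 (A B C u0 u1 l0 l1 d sd : ℝ) (hd : d ≠ 0) (hs : sd ≠ 0)
    (hcon : C*u0^2 - 2*B*u0*u1 + A*u1^2 = d) (hsd2 : sd^2 = d) :
    l0 = (u0*l0 + u1*l1) * ((C*u0 - B*u1)/d) +
      (A*(u1/sd)*l0 + B*(u1/sd)*l1 + B*(-(u0)/sd)*l0 + C*(-(u0)/sd)*l1) * (u1/sd) := by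
  rw [← hsd2] at hcon ⊢
  field_simp
  linear_combination (-l0) * hcon

private lemma dec_comp1 (A B C u0 u1 l0 l1 d sd : ℝ) (hd : d ≠ 0) (hs : sd ≠ 0)
    (hcon : C*u0^2 - 2*B*u0*u1 + A*u1^2 = d) (hsd2 : sd^2 = d) :
    l1 = (u0*l0 + u1*l1) * ((-(B*u0) + A*u1)/d) +
      (A*(u1/sd)*l0 + B*(u1/sd)*l1 + B*(-(u0)/sd)*l0 + C*(-(u0)/sd)*l1) * (-(u0)/sd) := by
  rw [← hsd2] at hcon ⊢
  field_simp
  linear_combination (-l1) * hcon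

/-- Characterization of the Jacobian columns of an isothermic coordinate change:
`ℓ₁ᵀgℓ₂ = 0`, `ℓ₁ᵀgℓ₁ = ℓ₂ᵀgℓ₂`, `ℓ₁ᵀK̂ℓ₂ = 0` hold iff (up to swapping) `ℓ₁` is a
multiple `γ·Ju` of the rotated eigencovector and `ℓ₂ = ±γ·g⁻¹u`. -/
theorem isothermic_jacobian_characterization
    (g : Matrix (Fin 2) (Fin 2) ℝ) (hg : g.PosDef)
    (u : Fin 2 → ℝ) (hu : u ⬝ᵥ g⁻¹.mulVec u = 1)
    (α : ℝ) (hα : α ≠ 0)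
    (Khat : Matrix (Fin 2) (Fin 2) ℝ)
    (hKhat : Khat = α • ((2 : ℝ) • Matrix.vecMulVec u u - g))
    (lev : Matrix (Fin 2) (Fin 2) ℝ) (hlev : lev = !![0, 1; -1, 0])
    (Ju : Fin 2 → ℝ) (hJu : ∀ a, Ju a = (∑ b, lev a b * u b) / Real.sqrt g.det)
    (l₁ l₂ : Fin 2 → ℝ) (hl₁ : l₁ ⬝ᵥ g.mulVec l₁ ≠ 0) :
    (l₁ ⬝ᵥ g.mulVec l₂ = 0 ∧ l₁ ⬝ᵥ g.mulVec l₁ = l₂ ⬝ᵥ g.mulVec l₂ ∧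
        l₁ ⬝ᵥ Khat.mulVec l₂ = 0) ↔
      ∃ γ : ℝ, γ ≠ 0 ∧ ∃ ε : ℝ, (ε = 1 ∨ ε = -1) ∧
        ((l₁ = γ • Ju ∧ l₂ = (ε * γ) • g⁻¹.mulVec u) ∨
         (l₂ = γ • Ju ∧ l₁ = (ε * γ) • g⁻¹.mulVec u)) := by
  have hsymm : g 1 0 = g 0 1 := by
    have hherm := hg.1; rw [Matrix.IsHermitian] at hherm
    exact (congrFun (congrFun hherm 1) 0).symm.trans (by simp [Matrix.conjTranspose_apply])
  set A := g 0 0 with hA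
  set B := g 0 1 with hB
  set C := g 1 1 with hC
  have hdpos : 0 < g.det := hg.det_pos
  set d := g.det with hd
  have hdne : d ≠ 0 := ne_of_gt hdpos
  set sd := Real.sqrt d with hsd
  have hsdpos : 0 < sd := Real.sqrt_pos.2 hdpos
  have hsdne : sd ≠ 0 := ne_of_gt hsdpos
  have hsd2 : sd ^ 2 = d := Real.sq_sqrt (le_of_lt hdpos)
  have hinv : g⁻¹ = d⁻¹ • !![C, -B; -B, A] := by
    rw [Matrix.inv_def, Matrix.adjugate_fin_two, Ring.inverse_eq_inv', hsymm]
  set v := g⁻¹.mulVec u with hv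
  set w := Ju with hw
  have hv0 : v 0 = (C * u 0 - B * u 1) / d := by
    rw [hv, hinv]; simp [Matrix.mulVec, dotProduct, Fin.sum_univ_two]
    field_simp; ring
  have hv1 : v 1 = (-(B * u 0) + A * u 1) / d := by
    rw [hv, hinv]; simp [Matrix.mulVec, dotProduct, Fin.sum_univ_two]
    field_simp
  have hw0 : w 0 = u 1 / sd := by
    rw [hJu, hlev]; simp [Fin.sum_univ_two]
  have hw1 : w 1 = -(u 0) / sd := by
    rw [hJu, hlev]; simp [Fin.sum_univ_two]
  have hcon : C * u 0 ^ 2 - 2 * B * u 0 * u 1 + A * u 1 ^ 2 = d := by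
    have h : u 0 * v 0 + u 1 * v 1 = 1 := by
      rw [← hu]; simp [dotProduct, Fin.sum_univ_two]
    rw [hv0, hv1] at h
    field_simp at h
    linear_combination h
  have hG : ∀ x y : Fin 2 → ℝ, x ⬝ᵥ g.mulVec y =
      A * x 0 * y 0 + B * x 0 * y 1 + B * x 1 * y 0 + C * x 1 * y 1 := by
    intro x y
    simp [Matrix.mulVec, dotProduct, Fin.sum_univ_two, hsymm]
    ring
  have hK : ∀ x y : Fin 2 → ℝ, x ⬝ᵥ Khat.mulVec y =
      α * (2 * (u ⬝ᵥ x) * (u ⬝ᵥ y) - x ⬝ᵥ g.mulVec y) := by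
    intro x y
    rw [hKhat, hG]
    simp [Matrix.mulVec, dotProduct, Fin.sum_univ_two, Matrix.vecMulVec_apply,
      Matrix.sub_apply, Matrix.smul_apply, hsymm]
    ring
  have hgv : g.mulVec v = u := by
    rw [hv, Matrix.mulVec_mulVec, Matrix.mul_nonsing_inv g (isUnit_iff_ne_zero.2 hdne),
      Matrix.one_mulVec]
  have huv : u ⬝ᵥ v = 1 := hu
  have huw : u ⬝ᵥ w = 0 := by
    simp only [dotProduct, Fin.sum_univ_two]
    rw [hw0, hw1]; ring
  have ovv : v ⬝ᵥ g.mulVec v = 1 := by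
    rw [hgv, dotProduct_comm]; exact huv
  have owv : w ⬝ᵥ g.mulVec v = 0 := by rw [hgv, dotProduct_comm]; exact huw
  have ovw : v ⬝ᵥ g.mulVec w = 0 := by
    rw [hG] at owv ⊢; linarith [owv]
  have oww : w ⬝ᵥ g.mulVec w = 1 := by
    rw [hG, hw0, hw1]
    field_simp
    linear_combination hcon - hsd2
  have hdec : ∀ l : Fin 2 → ℝ, l = (u ⬝ᵥ l) • v + (w ⬝ᵥ g.mulVec l) • w := by
    intro l
    have hul : u ⬝ᵥ l = u 0 * l 0 + u 1 * l 1 := by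
      simp [dotProduct, Fin.sum_univ_two]
    have hwgl : w ⬝ᵥ g.mulVec l =
        A * (u 1 / sd) * l 0 + B * (u 1 / sd) * l 1 + B * (-(u 0) / sd) * l 0
          + C * (-(u 0) / sd) * l 1 := by
      rw [hG, hw0, hw1]
    have h0 : l 0 = (u ⬝ᵥ l) * v 0 + (w ⬝ᵥ g.mulVec l) * w 0 := by
      rw [hul, hwgl, hv0, hw0]
      exact dec_comp0 A B C (u 0) (u 1) (l 0) (l 1) d sd hdne hsdne hcon hsd2
    have h1 : l 1 = (u ⬝ᵥ l) * v 1 + (w ⬝ᵥ g.mulVec l) * w 1 := by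
      rw [hul, hwgl, hv1, hw1]
      exact dec_comp1 A B C (u 0) (u 1) (l 0) (l 1) d sd hdne hsdne hcon hsd2
    funext i
    fin_cases i
    · simpa using h0
    · simpa using h1
  set a := u ⬝ᵥ l₁ with ha
  set b := w ⬝ᵥ g.mulVec l₁ with hb
  set c := u ⬝ᵥ l₂ with hc
  set e := w ⬝ᵥ g.mulVec l₂ with he
  have hl₁d : l₁ = a • v + b • w := hdec l₁
  have hl₂d : l₂ = c • v + e • w := hdec l₂
  have hbil : ∀ p q r s : ℝ,
      (p • v + q • w) ⬝ᵥ g.mulVec (r • v + s • w) = p * r + q * s := by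
    intro p q r s
    simp only [Matrix.mulVec_add, Matrix.mulVec_smul, dotProduct_add,
      add_dotProduct, dotProduct_smul, smul_dotProduct, smul_eq_mul,
      ovv, ovw, owv, oww]
    ring
  have hudot : ∀ p q : ℝ, u ⬝ᵥ (p • v + q • w) = p := by
    intro p q
    simp only [dotProduct_add, dotProduct_smul, smul_eq_mul, huv, huw]
    ring
  clear_value A B C d sd v w a b c e
  constructor
  · rintro ⟨h1, h2, h3⟩
    have e1 : a * c + b * e = 0 := by
      rw [hl₁d, hl₂d, hbil] at h1; exact h1
    have e2 : a ^ 2 + b ^ 2 = c ^ 2 + e ^ 2 := by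
      rw [hl₁d, hl₂d, hbil, hbil] at h2; linear_combination h2
    have e3 : a * c - b * e = 0 := by
      rw [hK] at h3
      have h4 : 2 * (u ⬝ᵥ l₁) * (u ⬝ᵥ l₂) - l₁ ⬝ᵥ g.mulVec l₂ = 0 := by
        rcases mul_eq_zero.1 h3 with h | h
        · exact absurd h hα
        · exact h
      rw [h1, ← ha, ← hc] at h4
      have hac : a * c = 0 := by linarith
      linarith [hac, e1]
    have hne : a ^ 2 + b ^ 2 ≠ 0 := by
      intro h; apply hl₁
      rw [hl₁d, hbil]
      linear_combination h
    rcases core_alg a b c e e1 e2 e3 hne with ⟨ha0, he0, hcb⟩ | ⟨hb0, hc0, hea⟩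
    · have hbne : b ≠ 0 := by
        intro h; apply hne; rw [ha0, h]; ring
      have hl1 : l₁ = b • w := by
        rw [hl₁d, ha0]; funext i
        simp only [Pi.add_apply, Pi.smul_apply, smul_eq_mul]; ring
      rcases hcb with h | h
      · refine ⟨b, hbne, 1, Or.inl rfl, Or.inl ⟨hl1, ?_⟩⟩
        rw [hl₂d, he0, h]; funext i
        simp only [Pi.add_apply, Pi.smul_apply, smul_eq_mul]; ring
      · refine ⟨b, hbne, -1, Or.inr rfl, Or.inl ⟨hl1, ?_⟩⟩
        rw [hl₂d, he0, h]; funext i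
        simp only [Pi.add_apply, Pi.smul_apply, smul_eq_mul]; ring
    · have hene : e ≠ 0 := by
        intro h; apply hne; rw [e2, hc0, h]; ring
      have hl2 : l₂ = e • w := by
        rw [hl₂d, hc0]; funext i
        simp only [Pi.add_apply, Pi.smul_apply, smul_eq_mul]; ring
      rcases hea with h | h
      · refine ⟨e, hene, 1, Or.inl rfl, Or.inr ⟨hl2, ?_⟩⟩
        rw [hl₁d, hb0, show a = e by linarith]; funext i
        simp only [Pi.add_apply, Pi.smul_apply, smul_eq_mul]; ring
      · refine ⟨e, hene, -1, Or.inr rfl, Or.inr ⟨hl2, ?_⟩⟩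
        rw [hl₁d, hb0, show a = -e by linarith]; funext i
        simp only [Pi.add_apply, Pi.smul_apply, smul_eq_mul]; ring
  · rintro ⟨γ, hγ, ε, hε, hcase⟩
    have hε2 : ε ^ 2 = 1 := by rcases hε with h | h <;> rw [h] <;> ring
    have hcomm : ∀ x y : Fin 2 → ℝ, x ⬝ᵥ g.mulVec y = y ⬝ᵥ g.mulVec x := by
      intro x y; rw [hG, hG]; ring
    have key : ∀ x y : Fin 2 → ℝ, x = γ • w → y = (ε * γ) • v →
        (x ⬝ᵥ g.mulVec y = 0 ∧ x ⬝ᵥ g.mulVec x = y ⬝ᵥ g.mulVec y ∧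
          x ⬝ᵥ Khat.mulVec y = 0) := by
      rintro x y rfl rfl
      have b1 := hbil 0 γ (ε * γ) 0
      have b2 := hbil 0 γ 0 γ
      have b3 := hbil (ε * γ) 0 (ε * γ) 0
      have hu1 := hudot 0 γ
      simp only [zero_smul, zero_add, add_zero] at b1 b2 b3 hu1
      refine ⟨?_, ?_, ?_⟩
      · rw [b1]; ring
      · rw [b2, b3]; linear_combination -γ^2 * hε2
      · rw [hK, hu1, b1]; ring
    rcases hcase with ⟨h1, h2⟩ | ⟨h1, h2⟩
    · exact key l₁ l₂ h1 h2
    · obtain ⟨k1, k2, k3⟩ := key l₂ l₁ h1 h2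
      refine ⟨?_, k2.symm, ?_⟩
      · rw [hcomm]; exact k1
      · rw [hK] at k3 ⊢
        rw [hcomm l₂ l₁] at k3
        linear_combination k3
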